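/- Kuratowski Lemma: if $\kappa$ is an infinite cardinal and $\mathcal{E}$ is a family of sets with $|\mathcal{E}| \leq \kappa$ and $|A| \geq \kappa$ for every $A \in \mathcal{E}$, then there is a function $f : \bigcup \mathcal{E} \to \kappa$ such that $f[A] = \kappa$ for every $A \in \mathcal{E}$ (i.e. $\mathcal{E}$ is $\kappa$-breakable). -/
import Mathlib


open Cardinal Set

/-- Kuratowski Lemma: if `κ` is an infinite cardinal and `𝓔` is a family
of sets with `|𝓔| ≤ κ` and `|A| ≥ κ` for all `A ∈ 𝓔`, then `𝓔` is `κ`-breakable: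
there is `f : X → κ` which is surjective onto `κ` on every `A ∈ 𝓔`. -/
theorem stmt9 (κ : Cardinal.{0}) (hκ : ℵ₀ ≤ κ) (X : Type) (𝓔 : Set (Set X))
    (hcard : #𝓔 ≤ κ) (hbig : ∀ A ∈ 𝓔, κ ≤ #A) :
    ∃ f : X → Quotient.out κ, ∀ A ∈ 𝓔, f '' A = Set.univ := by
  classical
  set K := Quotient.out κ with hKdef
  have hK : #K = κ := Cardinal.mk_out κ
  have hKne : Nonempty K := by
    rw [← Cardinal.mk_ne_zero_iff, hK]
    exact (Cardinal.aleph0_pos.trans_le hκ).ne'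
  rcases Set.eq_empty_or_nonempty 𝓔 with h | hEne
  · exact ⟨fun _ => Classical.arbitrary K, by simp [h]⟩
  have hIne : Nonempty (↥𝓔 × K) := ⟨⟨⟨hEne.choose, hEne.choose_spec⟩, Classical.arbitrary K⟩⟩
  set T := κ.ord.ToType with hTdef
  have hT : #T = κ := Cardinal.mk_ord_toType κ
  -- an injection from 𝓔 × K into T
  have hle : #(↥𝓔 × K) ≤ #T := by
    rw [hT, Cardinal.mk_prod, Cardinal.lift_id, Cardinal.lift_id, hK]
    calc #↥𝓔 * κ ≤ κ * κ := mul_le_mul' hcard le_rfl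
    _ = κ := Cardinal.mul_eq_self hκ
  obtain ⟨e⟩ := (Cardinal.le_def _ _).1 hle
  have hs : Function.Surjective (Function.invFun e) := Function.invFun_surjective e.injective
  set s : T → ↥𝓔 × K := Function.invFun e with hsdef
  -- a well-founded recursion picking fresh elements
  have wf : WellFounded ((· < ·) : T → T → Prop) := wellFounded_lt
  have hne : ∀ (t : T) (p : ∀ t' : T, t' < t → X),
      (((s t).1 : Set X) \ Set.range (fun u : Set.Iio t => p u.1 u.2)).Nonempty := by
    intro t p
    rw [Set.diff_nonempty]
    intro hsub
    have h1 : #(Set.range (fun u : Set.Iio t => p u.1 u.2)) < κ :=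
      lt_of_le_of_lt Cardinal.mk_range_le (Cardinal.mk_Iio_ord_toType t)
    have h2 : κ ≤ #((s t).1 : Set X) := hbig _ (s t).1.2
    exact absurd (h2.trans (Cardinal.mk_le_mk_of_subset hsub)) (not_le.2 h1)
  set F : ∀ t : T, (∀ t' : T, t' < t → X) → X := fun t p => (hne t p).some with hF
  set g : T → X := wf.fix F with hg
  have hgeq : ∀ t, g t = F t (fun t' _ => g t') := fun t => wf.fix_eq F t
  have hgspec : ∀ t : T, g t ∈ ((s t).1 : Set X) ∧
      g t ∉ Set.range (fun u : Set.Iio t => g u.1) := by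
    intro t
    have h2 : F t (fun t' _ => g t') ∈
        (((s t).1 : Set X) \ Set.range (fun u : Set.Iio t => g u.1)) :=
      (hne t (fun t' _ => g t')).some_mem
    rw [← hgeq t] at h2
    exact h2
  have hginj : Function.Injective g := by
    intro a b hab
    rcases lt_trichotomy a b with h | h | h
    · exact absurd ⟨⟨a, h⟩, hab⟩ (hgspec b).2
    · exact h
    · exact absurd ⟨⟨b, h⟩, hab.symm⟩ (hgspec a).2
  refine ⟨fun x => if h : ∃ t, g t = x then (s h.choose).2 else Classical.arbitrary K, ?_⟩
  intro A hA
  apply Set.eq_univ_of_forall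
  intro k
  obtain ⟨t, ht⟩ := hs (⟨A, hA⟩, k)
  refine ⟨g t, ?_, ?_⟩
  · have := (hgspec t).1
    rwa [ht] at this
  · have hex : ∃ t', g t' = g t := ⟨t, rfl⟩
    show (if h : ∃ t', g t' = g t then (s h.choose).2 else Classical.arbitrary K) = k
    rw [dif_pos hex, hginj hex.choose_spec, ht]
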